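/- arXiv:2101.01245 — 2 statements merged into one kernel-verified Lean document; each statement's English description precedes it below -/
import Mathlib

section
/- Let G₁* be the class of functions f_{c,h} : ℝ → ℝ given by f_{c,h}(x) = 1{c ≤ x < c+h} · (x−c)/h, indexed by c ∈ ℝ and h > 0 (each f_{c,h} is the line from (c,0) to (c+h,1) supported on [c, c+h)). Then no 4-point subset of ℝ × ℝ is shattered by the class of subgraphs of G₁*; i.e., G₁* is a VC-subgraph class with VC index at most 4. -/
/-- The subgraph of a function `f : ℝ → ℝ`:
`{(x,t) : t ≤ f(x) ≤ 0 or 0 ≤ t ≤ f(x)}`. -/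
def subgraph (f : ℝ → ℝ) : Set (ℝ × ℝ) :=
  {p | (p.2 ≤ f p.1 ∧ f p.1 ≤ 0) ∨ (0 ≤ p.2 ∧ p.2 ≤ f p.1)}

/-- The ramp function `f_{c,h}(x) = 1{c ≤ x < c+h} · (x−c)/h`, the line from
`(c,0)` to `(c+h,1)` supported on `[c, c+h)`. -/
noncomputable def rampFn (c h : ℝ) : ℝ → ℝ :=
  fun x => if c ≤ x ∧ x < c + h then (x - c) / h else 0

lemma ramp_nonneg {c h : ℝ} (hh : 0 < h) (x : ℝ) : 0 ≤ rampFn c h x := by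
  unfold rampFn; split_ifs with hc
  · exact div_nonneg (by linarith [hc.1]) hh.le
  · exact le_refl 0

lemma mem_pos {c h : ℝ} (p : ℝ × ℝ) (hh : 0 < h) (ht : 0 < p.2) :
    p ∈ subgraph (rampFn c h) ↔ (c + p.2 * h ≤ p.1 ∧ p.1 < c + h) := by
  simp only [subgraph, Set.mem_setOf_eq, rampFn]
  split_ifs with hcond
  · constructor
    · rintro (⟨h1, h2⟩ | ⟨h1, h2⟩)
      · rw [div_le_iff₀ hh] at h2
        rw [le_div_iff₀ hh] at h1
        nlinarith
      · rw [le_div_iff₀ hh] at h2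
        exact ⟨by linarith, hcond.2⟩
    · rintro ⟨h1, h2⟩
      right
      exact ⟨ht.le, by rw [le_div_iff₀ hh]; linarith⟩
  · push_neg at hcond
    constructor
    · rintro (⟨h1, h2⟩ | ⟨h1, h2⟩) <;> linarith
    · rintro ⟨h1, h2⟩
      have hch : c < p.1 := by nlinarith [mul_pos ht hh]
      have := hcond hch.le
      linarith

lemma mem_neg {c h : ℝ} (p : ℝ × ℝ) (hh : 0 < h) (ht : p.2 < 0) :
    p ∈ subgraph (rampFn c h) ↔ (p.1 ≤ c ∨ c + h ≤ p.1) := by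
  simp only [subgraph, Set.mem_setOf_eq, rampFn]
  split_ifs with hcond
  · constructor
    · rintro (⟨h1, h2⟩ | ⟨h1, h2⟩)
      · rw [div_le_iff₀ hh] at h2
        left; linarith
      · linarith
    · rintro (h1 | h2)
      · left
        constructor
        · rw [le_div_iff₀ hh]; nlinarith [mul_neg_of_neg_of_pos ht hh]
        · rw [div_le_iff₀ hh]; linarith
      · exact absurd hcond.2 (by linarith)
  · push_neg at hcond
    constructor
    · intro _
      by_cases hc : c ≤ p.1
      · right; exact hcond hc
      · left; linarith
    · intro _
      left; exact ⟨ht.le, le_refl 0⟩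

lemma sel_iff {c h : ℝ} (p : ℝ × ℝ) (hh : 0 < h) (ht : p.2 ≠ 0) (hx : p.1 < c + h) :
    (p ∈ subgraph (rampFn c h) ↔
      0 ≤ (if 0 < p.2 then (1:ℝ) else -1) * (p.1 - (if 0 < p.2 then p.2 else 0) * h - c)) := by
  rcases ht.lt_or_gt with htn | htp
  · rw [if_neg (not_lt.mpr htn.le), if_neg (not_lt.mpr htn.le), mem_neg p hh htn]
    constructor
    · rintro (h1 | h2)
      · nlinarith
      · linarith
    · intro h1; left; nlinarith
  · rw [if_pos htp, if_pos htp, mem_pos p hh htp]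
    constructor
    · rintro ⟨h1, h2⟩; nlinarith
    · intro h1; exact ⟨by nlinarith, hx⟩


lemma termA (μ G : ℝ) (hf : μ < 0 ↔ 0 ≤ G) : μ * G ≤ 0 ∧ (0 < μ → μ * G < 0) := by
  rcases lt_trichotomy μ 0 with hm | hm | hm
  · have hG := hf.mp hm
    exact ⟨mul_nonpos_of_nonpos_of_nonneg hm.le hG, fun h => absurd h (by linarith)⟩
  · simp [hm]
  · have hG : G < 0 := by
      by_contra hG; push_neg at hG
      exact absurd (hf.mpr hG) (by linarith)
    exact ⟨(mul_neg_of_pos_of_neg hm hG).le, fun _ => mul_neg_of_pos_of_neg hm hG⟩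

lemma termB (μ G : ℝ) (hf : 0 < μ ↔ 0 ≤ G) : 0 ≤ μ * G ∧ (μ < 0 → 0 < μ * G) := by
  rcases lt_trichotomy μ 0 with hm | hm | hm
  · have hG : G < 0 := by
      by_contra hG; push_neg at hG
      exact absurd (hf.mpr hG) (by linarith)
    exact ⟨(mul_pos_of_neg_of_neg hm hG).le, fun _ => mul_pos_of_neg_of_neg hm hG⟩
  · simp [hm]
  · have hG := hf.mp hm
    exact ⟨mul_nonneg hm.le hG, fun h => absurd h (by linarith)⟩

lemma core3 (x1 x2 x3 σ1 σ2 σ3 τ1 τ2 τ3 : ℝ)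
    (h12 : x1 < x2) (h23 : x2 < x3)
    (hs1 : σ1 = 1 ∨ σ1 = -1) (hs2 : σ2 = 1 ∨ σ2 = -1) (hs3 : σ3 = 1 ∨ σ3 = -1)
    (H : ∀ s1 s2 s3 : Bool, ∃ c h : ℝ, 0 < h ∧
      (s1 = true ↔ 0 ≤ σ1 * (x1 - τ1 * h - c)) ∧
      (s2 = true ↔ 0 ≤ σ2 * (x2 - τ2 * h - c)) ∧
      (s3 = true ↔ 0 ≤ σ3 * (x3 - τ3 * h - c))) : False := by
  classical
  have q1 : σ1 * σ1 = 1 := by rcases hs1 with h | h <;> rw [h] <;> ring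
  have q2 : σ2 * σ2 = 1 := by rcases hs2 with h | h <;> rw [h] <;> ring
  have q3 : σ3 * σ3 = 1 := by rcases hs3 with h | h <;> rw [h] <;> ring
  set μ1 := (x3 - x2) * σ1 with hμ1
  set μ2 := -(x3 - x1) * σ2 with hμ2
  set μ3 := (x2 - x1) * σ3 with hμ3
  set K := (x3 - x2) * τ1 - (x3 - x1) * τ2 + (x2 - x1) * τ3 with hK
  by_cases hA : K < 0 ∨ (K = 0 ∧ (0 < μ1 ∨ 0 < μ2 ∨ 0 < μ3))
  · obtain ⟨c, h, hh, e1, e2, e3⟩ := H (decide (μ1 < 0)) (decide (μ2 < 0)) (decide (μ3 < 0))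
    rw [decide_eq_true_eq] at e1 e2 e3
    have T1 := termA _ _ e1
    have T2 := termA _ _ e2
    have T3 := termA _ _ e3
    have iden : μ1 * (σ1 * (x1 - τ1 * h - c)) + μ2 * (σ2 * (x2 - τ2 * h - c))
        + μ3 * (σ3 * (x3 - τ3 * h - c)) = -(h * K) := by
      rw [hμ1, hμ2, hμ3, hK]
      linear_combination ((x3 - x2) * (x1 - τ1 * h - c)) * q1
        + (-(x3 - x1) * (x2 - τ2 * h - c)) * q2 + ((x2 - x1) * (x3 - τ3 * h - c)) * q3
    rcases hA with hKlt | ⟨hK0, hpos⟩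
    · have hpos : 0 < -(h * K) := by nlinarith
      linarith [T1.1, T2.1, T3.1]
    · rw [hK0, mul_zero, neg_zero] at iden
      rcases hpos with hp | hp | hp
      · linarith [T1.2 hp, T2.1, T3.1]
      · linarith [T1.1, T2.2 hp, T3.1]
      · linarith [T1.1, T2.1, T3.2 hp]
  · push_neg at hA
    obtain ⟨hKge, hA2⟩ := hA
    obtain ⟨c, h, hh, e1, e2, e3⟩ := H (decide (0 < μ1)) (decide (0 < μ2)) (decide (0 < μ3))
    rw [decide_eq_true_eq] at e1 e2 e3
    have T1 := termB _ _ e1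
    have T2 := termB _ _ e2
    have T3 := termB _ _ e3
    have iden : μ1 * (σ1 * (x1 - τ1 * h - c)) + μ2 * (σ2 * (x2 - τ2 * h - c))
        + μ3 * (σ3 * (x3 - τ3 * h - c)) = -(h * K) := by
      rw [hμ1, hμ2, hμ3, hK]
      linear_combination ((x3 - x2) * (x1 - τ1 * h - c)) * q1
        + (-(x3 - x1) * (x2 - τ2 * h - c)) * q2 + ((x2 - x1) * (x3 - τ3 * h - c)) * q3
    rcases lt_or_eq_of_le hKge with hKgt | hKeq
    · have : -(h * K) < 0 := by nlinarith
      linarith [T1.1, T2.1, T3.1]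
    · have hμs := hA2 hKeq.symm
      have hμ1lt : μ1 < 0 := by
        rcases lt_or_eq_of_le hμs.1 with h' | h'
        · exact h'
        · exfalso
          rcases hs1 with hσ | hσ <;> rw [hμ1, hσ] at h' <;> nlinarith
      rw [← hKeq, mul_zero, neg_zero] at iden
      linarith [T1.2 hμ1lt, T2.1, T3.1]

/-- The class `G₁* = {f_{c,h} : c ∈ ℝ, h > 0}` of ramp functions is a
VC-subgraph class with index at most 4: no 4-point subset of `ℝ × ℝ` is shattered
by the subgraphs of `G₁*`. -/
theorem rampFn_subgraphs_not_shatter_four_points :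
    ∀ D : Finset (ℝ × ℝ), D.card = 4 →
      ¬ (∀ E : Finset (ℝ × ℝ), E ⊆ D →
          ∃ c h : ℝ, 0 < h ∧ subgraph (rampFn c h) ∩ ↑D = (↑E : Set (ℝ × ℝ))) := by
  classical
  intro D hcard H
  -- reformulate the shattering hypothesis pointwise
  have Hsel : ∀ E : Finset (ℝ × ℝ), E ⊆ D → ∃ c h : ℝ, 0 < h ∧
      ∀ p ∈ D, (p ∈ subgraph (rampFn c h) ↔ p ∈ E) := by
    intro E hE
    obtain ⟨c, h, hh, heq⟩ := H E hE
    refine ⟨c, h, hh, fun p hp => ?_⟩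
    constructor
    · intro hm
      have hm2 : p ∈ subgraph (rampFn c h) ∩ ↑D := ⟨hm, hp⟩
      rw [heq] at hm2
      exact_mod_cast hm2
    · intro hm
      have hm2 : p ∈ (↑E : Set (ℝ × ℝ)) := by exact_mod_cast hm
      rw [← heq] at hm2
      exact hm2.1
  -- no point has second coordinate 0
  have hzero : ∀ p ∈ D, p.2 ≠ 0 := by
    intro p hp hp0
    obtain ⟨c, h, hh, hiff⟩ := Hsel ∅ (Finset.empty_subset D)
    have hm : p ∈ subgraph (rampFn c h) :=
      Or.inr ⟨le_of_eq hp0.symm, hp0 ▸ ramp_nonneg hh p.1⟩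
    have := (hiff p hp).mp hm
    simp at this
  -- all first coordinates are distinct
  by_cases hco : ∃ p ∈ D, ∃ q ∈ D, p ≠ q ∧ p.1 = q.1
  · obtain ⟨p, hp, q, hq, hpq, hx⟩ := hco
    rcases (hzero p hp).lt_or_gt with hpn | hpp <;>
      rcases (hzero q hq).lt_or_gt with hqn | hqp
    -- both negative : E = {p}
    · obtain ⟨c, h, hh, hiff⟩ := Hsel {p} (by simpa using hp)
      have h1 : p ∈ subgraph (rampFn c h) := (hiff p hp).mpr (by simp)
      have h2 : q ∉ subgraph (rampFn c h) := by
        intro hm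
        have := (hiff q hq).mp hm
        simp at this
        exact hpq this.symm
      rw [mem_neg p hh hpn] at h1
      rw [mem_neg q hh hqn] at h2
      push_neg at h2
      rcases h1 with h1 | h1 <;> linarith [h2.1, h2.2]
    -- p negative, q positive : E = {p, q}
    · obtain ⟨c, h, hh, hiff⟩ := Hsel {p, q} (by
        intro r hr; simp at hr; rcases hr with hr | hr <;> rw [hr] <;> assumption)
      have h1 : p ∈ subgraph (rampFn c h) := (hiff p hp).mpr (by simp)
      have h2 : q ∈ subgraph (rampFn c h) := (hiff q hq).mpr (by simp)
      rw [mem_neg p hh hpn] at h1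
      rw [mem_pos q hh hqp] at h2
      have := mul_pos hqp hh
      rcases h1 with h1 | h1 <;> linarith [h2.1, h2.2]
    -- p positive, q negative : E = {p, q}
    · obtain ⟨c, h, hh, hiff⟩ := Hsel {p, q} (by
        intro r hr; simp at hr; rcases hr with hr | hr <;> rw [hr] <;> assumption)
      have h1 : p ∈ subgraph (rampFn c h) := (hiff p hp).mpr (by simp)
      have h2 : q ∈ subgraph (rampFn c h) := (hiff q hq).mpr (by simp)
      rw [mem_pos p hh hpp] at h1
      rw [mem_neg q hh hqn] at h2
      have := mul_pos hpp hh
      rcases h2 with h2 | h2 <;> linarith [h1.1, h1.2]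
    -- both positive : E = {bigger t}
    · have hne2 : p.2 ≠ q.2 := by
        intro h2
        exact hpq (Prod.ext hx h2)
      rcases hne2.lt_or_gt with hlt | hlt
      · obtain ⟨c, h, hh, hiff⟩ := Hsel {q} (by simpa using hq)
        have h1 : q ∈ subgraph (rampFn c h) := (hiff q hq).mpr (by simp)
        have h2 : p ∉ subgraph (rampFn c h) := by
          intro hm
          have := (hiff p hp).mp hm
          simp at this
          exact hpq this
        rw [mem_pos q hh hqp] at h1
        rw [mem_pos p hh hpp] at h2
        push_neg at h2
        have hmul : p.2 * h ≤ q.2 * h := by nlinarith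
        have hle : c + p.2 * h ≤ p.1 := by linarith [h1.1]
        linarith [h2 hle, h1.2]
      · obtain ⟨c, h, hh, hiff⟩ := Hsel {p} (by simpa using hp)
        have h1 : p ∈ subgraph (rampFn c h) := (hiff p hp).mpr (by simp)
        have h2 : q ∉ subgraph (rampFn c h) := by
          intro hm
          have := (hiff q hq).mp hm
          simp at this
          exact hpq this.symm
        rw [mem_pos p hh hpp] at h1
        rw [mem_pos q hh hqp] at h2
        push_neg at h2
        have hmul : q.2 * h ≤ p.2 * h := by nlinarith
        have hle : c + q.2 * h ≤ q.1 := by linarith [h1.1]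
        linarith [h2 hle, h1.2]
  · push_neg at hco
    -- extract the four points sorted by first coordinate
    have h4 : 0 < D.card := by omega
    obtain ⟨w, hwD, hwmax⟩ := Finset.exists_max_image D Prod.fst (Finset.card_pos.mp h4)
    have hD1card : (D.erase w).card = 3 := by
      rw [Finset.card_erase_of_mem hwD, hcard]
    obtain ⟨z3, hz3m, hz3max⟩ := Finset.exists_max_image (D.erase w) Prod.fst
      (Finset.card_pos.mp (by omega))
    have hD2card : ((D.erase w).erase z3).card = 2 := by
      rw [Finset.card_erase_of_mem hz3m, hD1card]
    obtain ⟨z2, hz2m, hz2max⟩ := Finset.exists_max_image ((D.erase w).erase z3) Prod.fst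
      (Finset.card_pos.mp (by omega))
    have hD3card : (((D.erase w).erase z3).erase z2).card = 1 := by
      rw [Finset.card_erase_of_mem hz2m, hD2card]
    obtain ⟨z1, hz1m⟩ := Finset.card_pos.mp (by omega : 0 < (((D.erase w).erase z3).erase z2).card)
    -- memberships in D
    have hz1D : z1 ∈ D := Finset.mem_of_mem_erase (Finset.mem_of_mem_erase
      (Finset.mem_of_mem_erase hz1m))
    have hz2D : z2 ∈ D := Finset.mem_of_mem_erase (Finset.mem_of_mem_erase hz2m)
    have hz3D : z3 ∈ D := Finset.mem_of_mem_erase hz3m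
    -- distinctness
    have hne1w : z1 ≠ w := (Finset.mem_erase.mp (Finset.mem_of_mem_erase
      (Finset.mem_of_mem_erase hz1m))).1
    have hne2w : z2 ≠ w := (Finset.mem_erase.mp (Finset.mem_of_mem_erase hz2m)).1
    have hne3w : z3 ≠ w := (Finset.mem_erase.mp hz3m).1
    have hne13 : z1 ≠ z3 := (Finset.mem_erase.mp (Finset.mem_of_mem_erase hz1m)).1
    have hne23 : z2 ≠ z3 := (Finset.mem_erase.mp hz2m).1
    have hne12 : z1 ≠ z2 := (Finset.mem_erase.mp hz1m).1
    -- strict orders on first coordinates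
    have h1w : z1.1 < w.1 := lt_of_le_of_ne (hwmax z1 hz1D) (hco z1 hz1D w hwD hne1w)
    have h2w : z2.1 < w.1 := lt_of_le_of_ne (hwmax z2 hz2D) (hco z2 hz2D w hwD hne2w)
    have h3w : z3.1 < w.1 := lt_of_le_of_ne (hwmax z3 hz3D) (hco z3 hz3D w hwD hne3w)
    have h13 : z1.1 < z3.1 := lt_of_le_of_ne
      (hz3max z1 (Finset.mem_of_mem_erase (Finset.mem_of_mem_erase hz1m))) (hco z1 hz1D z3 hz3D hne13)
    have h23 : z2.1 < z3.1 := lt_of_le_of_ne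
      (hz3max z2 (Finset.mem_of_mem_erase hz2m)) (hco z2 hz2D z3 hz3D hne23)
    have h12 : z1.1 < z2.1 := lt_of_le_of_ne
      (hz2max z1 (Finset.mem_of_mem_erase hz1m)) (hco z1 hz1D z2 hz2D hne12)
    -- apply the core lemma
    refine core3 z1.1 z2.1 z3.1
      (if 0 < z1.2 then (1:ℝ) else -1) (if 0 < z2.2 then (1:ℝ) else -1)
      (if 0 < z3.2 then (1:ℝ) else -1)
      (if 0 < z1.2 then z1.2 else 0) (if 0 < z2.2 then z2.2 else 0)
      (if 0 < z3.2 then z3.2 else 0)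
      h12 h23 ?_ ?_ ?_ ?_
    · split_ifs <;> simp
    · split_ifs <;> simp
    · split_ifs <;> simp
    intro s1 s2 s3
    set E : Finset (ℝ × ℝ) := D.filter (fun r =>
      (r = z1 ∧ s1 = true) ∨ (r = z2 ∧ s2 = true) ∨ (r = z3 ∧ s3 = true)
        ∨ (r = w ∧ 0 < w.2)) with hE
    obtain ⟨c, h, hh, hiff⟩ := Hsel E (Finset.filter_subset _ _)
    -- bound from the maximal point w
    have hwlt : w.1 < c + h := by
      by_cases hw : 0 < w.2
      · have hwE : w ∈ E := Finset.mem_filter.mpr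
          ⟨hwD, Or.inr (Or.inr (Or.inr ⟨rfl, hw⟩))⟩
        have hm := (hiff w hwD).mpr hwE
        exact ((mem_pos w hh hw).mp hm).2
      · have hwneg : w.2 < 0 := (hzero w hwD).lt_or_gt.resolve_right hw
        have hwE : w ∉ E := by
          intro hmem
          rcases (Finset.mem_filter.mp hmem).2 with ⟨e, -⟩ | ⟨e, -⟩ | ⟨e, -⟩ | ⟨-, e⟩
          · exact hne1w e.symm
          · exact hne2w e.symm
          · exact hne3w e.symm
          · exact hw e
        have hnm : w ∉ subgraph (rampFn c h) := fun hm => hwE ((hiff w hwD).mp hm)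
        rw [mem_neg w hh hwneg] at hnm
        push_neg at hnm
        exact hnm.2
    have key : ∀ z : ℝ × ℝ, z ∈ D → z.1 < w.1 → ∀ s : Bool,
        (z ∈ E ↔ s = true) →
        (s = true ↔ 0 ≤ (if 0 < z.2 then (1:ℝ) else -1)
            * (z.1 - (if 0 < z.2 then z.2 else 0) * h - c)) := by
      intro z hzD hzlt s hsE
      rw [← hsE, ← hiff z hzD]
      exact sel_iff z hh (hzero z hzD) (by linarith)
    refine ⟨c, h, hh, ?_, ?_, ?_⟩
    · refine key z1 hz1D h1w s1 ?_
      rw [hE, Finset.mem_filter]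
      constructor
      · rintro ⟨-, ⟨-, e⟩ | ⟨e, -⟩ | ⟨e, -⟩ | ⟨e, -⟩⟩
        · exact e
        · exact absurd e hne12
        · exact absurd e hne13
        · exact absurd e hne1w
      · intro hs
        exact ⟨hz1D, Or.inl ⟨rfl, hs⟩⟩
    · refine key z2 hz2D h2w s2 ?_
      rw [hE, Finset.mem_filter]
      constructor
      · rintro ⟨-, ⟨e, -⟩ | ⟨-, e⟩ | ⟨e, -⟩ | ⟨e, -⟩⟩
        · exact absurd e (Ne.symm hne12) 
        · exact e
        · exact absurd e hne23
        · exact absurd e hne2w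
      · intro hs
        exact ⟨hz2D, Or.inr (Or.inl ⟨rfl, hs⟩)⟩
    · refine key z3 hz3D h3w s3 ?_
      rw [hE, Finset.mem_filter]
      constructor
      · rintro ⟨-, ⟨e, -⟩ | ⟨e, -⟩ | ⟨-, e⟩ | ⟨e, -⟩⟩
        · exact absurd e (Ne.symm hne13)
        · exact absurd e (Ne.symm hne23)
        · exact e
        · exact absurd e hne3w
      · intro hs
        exact ⟨hz3D, Or.inr (Or.inr (Or.inl ⟨rfl, hs⟩))⟩
end

section
/- Let k : ℝ → ℝ be a bounded kernel with support in [−1,1], and for a bandwidth h > 0 and point c define the scaled kernel weight ω(x) = (1/h)·k((x−c)/h)·1{c ≤ x < c+h}·((x−c)/h)^l for a nonnegative integer l. If f : ℝ → ℝ is a probability density that is continuously differentiable with |f'| ≤ M on a neighborhood of c, then | (1/h)·E[k((X−c)/h)·((X−c)/h)^l·1{c ≤ X < c+h}] − f(c)·γ_l | ≤ M'·h, where γ_l = ∫₀¹ k(u)·u^l du, X has density f, and M' depends only on M and k. -/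
open MeasureTheory

/-- Boundary kernel-bias bound. Let `k` be a bounded measurable kernel
supported in `[−1,1]` and `γ_l = ∫₀¹ k(u)u^l du`. Then there is `M'` depending only on
the derivative bound `M` and on `k` such that for every density-like function `f`
differentiable on `[c, c+h]` with `|f'| ≤ M` there,
`| h⁻¹ ∫_{[c,c+h)} k((x−c)/h)·((x−c)/h)^l·f(x) dx − f(c)·γ_l | ≤ M'·h`. -/
theorem kernel_boundary_bias_bound
    (k : ℝ → ℝ) (hkm : Measurable k) (Mk : ℝ) (hkb : ∀ u, |k u| ≤ Mk)
    (hsupp : ∀ u, u ∉ Set.Icc (-1 : ℝ) 1 → k u = 0)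
    (M : ℝ) (hM : 0 ≤ M) :
    ∃ M' : ℝ, ∀ (f f' : ℝ → ℝ) (c h : ℝ) (l : ℕ), 0 < h →
      (∀ x ∈ Set.Icc c (c + h), HasDerivAt f (f' x) x) →
      (∀ x ∈ Set.Icc c (c + h), |f' x| ≤ M) →
      |h⁻¹ * (∫ x in Set.Ico c (c + h), k ((x - c) / h) * ((x - c) / h) ^ l * f x)
          - f c * ∫ u in (0:ℝ)..1, k u * u ^ l| ≤ M' * h := by
  refine ⟨Mk * M, ?_⟩
  intro f f' c h l hh hderiv hbound
  have hMk : 0 ≤ Mk := (abs_nonneg _).trans (hkb 0)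
  have hne : h ≠ 0 := hh.ne'
  -- f is continuous on [c, c+h]
  have hfc : ContinuousOn f (Set.Icc c (c + h)) := fun x hx =>
    (hderiv x hx).continuousAt.continuousWithinAt
  -- the map u ↦ c + u * h sends [0,1] into [c, c+h]
  have hmap : ∀ u ∈ Set.Icc (0:ℝ) 1, c + u * h ∈ Set.Icc c (c + h) := by
    intro u hu
    constructor
    · nlinarith [hu.1, hu.2]
    · nlinarith [hu.1, hu.2]
  -- mean value bound
  have hMVT : ∀ u ∈ Set.Icc (0:ℝ) 1, |f (c + u * h) - f c| ≤ M * h := by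
    intro u hu
    have hmem := hmap u hu
    have hcm : c ∈ Set.Icc c (c + h) := ⟨le_refl c, by linarith⟩
    have := (convex_Icc c (c + h)).norm_image_sub_le_of_norm_hasDerivWithin_le
      (f := f) (f' := f') (fun x hx => (hderiv x hx).hasDerivWithinAt)
      (fun x hx => hbound x hx) hmem hcm
    have h2 : ‖f c - f (c + u * h)‖ ≤ M * ‖c - (c + u * h)‖ := this
    rw [Real.norm_eq_abs, Real.norm_eq_abs] at h2
    have h3 : |c - (c + u * h)| = u * h := by
      rw [abs_sub_comm, show c + u * h - c = u * h by ring,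
        abs_of_nonneg (by nlinarith [hu.1] : (0:ℝ) ≤ u * h)]
    rw [abs_sub_comm, h3] at h2
    calc |f (c + u * h) - f c| ≤ M * (u * h) := h2
      _ ≤ M * h := by
        nlinarith [mul_nonneg (mul_nonneg hM hh.le) (sub_nonneg.mpr hu.2)]
  -- change of variables
  have key : h⁻¹ * (∫ x in Set.Ico c (c + h), k ((x - c) / h) * ((x - c) / h) ^ l * f x)
      = ∫ u in (0:ℝ)..1, k u * u ^ l * f (c + u * h) := by
    have e1 : (∫ x in Set.Ico c (c + h), k ((x - c) / h) * ((x - c) / h) ^ l * f x)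
        = ∫ x in c..(c + h), k ((x - c) / h) * ((x - c) / h) ^ l * f x := by
      rw [intervalIntegral.integral_of_le (by linarith), ← integral_Icc_eq_integral_Ioc,
        integral_Icc_eq_integral_Ico]
    have e2 : (∫ u in (0:ℝ)..1,
          (fun x => k ((x - c) / h) * ((x - c) / h) ^ l * f x) (h * u + c))
        = h⁻¹ • ∫ x in (h * 0 + c)..(h * 1 + c),
            k ((x - c) / h) * ((x - c) / h) ^ l * f x := by
      exact intervalIntegral.integral_comp_mul_add
        (fun x => k ((x - c) / h) * ((x - c) / h) ^ l * f x) hne c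
    have e3 : (∫ u in (0:ℝ)..1,
          (fun x => k ((x - c) / h) * ((x - c) / h) ^ l * f x) (h * u + c))
        = ∫ u in (0:ℝ)..1, k u * u ^ l * f (c + u * h) := by
      apply intervalIntegral.integral_congr
      intro u _
      simp only
      have : (h * u + c - c) / h = u := by field_simp; ring
      rw [this, show h * u + c = c + u * h by ring]
    rw [e1, ← e3, e2, smul_eq_mul,
      show h * 0 + c = c by ring, show h * 1 + c = c + h by ring]
  rw [key]
  -- integrability facts on [0,1]
  have hcont2 : ContinuousOn (fun u : ℝ => f (c + u * h)) (Set.Icc (0:ℝ) 1) := by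
    apply hfc.comp ((continuous_const.add (continuous_id.mul continuous_const)).continuousOn)
    intro u hu; exact hmap u hu
  have haesm : AEStronglyMeasurable (fun u : ℝ => k u * u ^ l * f (c + u * h))
      (volume.restrict (Set.Ioc (0:ℝ) 1)) := by
    refine AEStronglyMeasurable.mul ?_ ?_
    · exact (hkm.mul (measurable_id.pow_const l)).aestronglyMeasurable
    · exact ((hcont2.mono Set.Ioc_subset_Icc_self).aestronglyMeasurable
        measurableSet_Ioc)
  obtain ⟨B, hB⟩ := (isCompact_Icc (a := c) (b := c + h)).exists_bound_of_continuousOn hfc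
  have hbd : ∀ u ∈ Set.Ioc (0:ℝ) 1, ‖k u * u ^ l * f (c + u * h)‖ ≤ Mk * B := by
    intro u hu
    have hu' : u ∈ Set.Icc (0:ℝ) 1 := Set.Ioc_subset_Icc_self hu
    have h1 : |u ^ l| ≤ 1 := by
      rw [abs_pow, abs_of_nonneg hu'.1]
      exact pow_le_one₀ hu'.1 hu'.2
    have h2 : |f (c + u * h)| ≤ B := by
      have := hB _ (hmap u hu')
      rwa [Real.norm_eq_abs] at this
    have hB0 : (0:ℝ) ≤ B := (abs_nonneg _).trans h2
    rw [Real.norm_eq_abs, abs_mul, abs_mul]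
    calc |k u| * |u ^ l| * |f (c + u * h)| ≤ Mk * 1 * B :=
          mul_le_mul (mul_le_mul (hkb u) h1 (abs_nonneg _) hMk) h2 (abs_nonneg _)
            (mul_nonneg hMk zero_le_one)
      _ = Mk * B := by ring
  have hint1 : IntervalIntegrable (fun u : ℝ => k u * u ^ l * f (c + u * h))
      volume 0 1 := by
    rw [intervalIntegrable_iff_integrableOn_Ioc_of_le (by norm_num)]
    refine ⟨haesm, ?_⟩
    apply MeasureTheory.HasFiniteIntegral.restrict_of_bounded (C := Mk * B) measure_Ioc_lt_top
    exact (ae_restrict_iff' measurableSet_Ioc).mpr (Filter.Eventually.of_forall hbd)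
  have hint2 : IntervalIntegrable (fun u : ℝ => k u * u ^ l) volume 0 1 := by
    rw [intervalIntegrable_iff_integrableOn_Ioc_of_le (by norm_num)]
    refine ⟨(hkm.mul (measurable_id.pow_const l)).aestronglyMeasurable, ?_⟩
    apply MeasureTheory.HasFiniteIntegral.restrict_of_bounded (C := Mk) measure_Ioc_lt_top
    refine (ae_restrict_iff' measurableSet_Ioc).mpr (Filter.Eventually.of_forall ?_)
    intro u hu
    have hu' : u ∈ Set.Icc (0:ℝ) 1 := Set.Ioc_subset_Icc_self hu
    have h1 : |u ^ l| ≤ 1 := by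
      rw [abs_pow, abs_of_nonneg hu'.1]
      exact pow_le_one₀ hu'.1 hu'.2
    rw [Real.norm_eq_abs, abs_mul]
    calc |k u| * |u ^ l| ≤ Mk * 1 :=
          mul_le_mul (hkb u) h1 (abs_nonneg _) hMk
      _ = Mk := by ring
  -- combine into a single integral
  have hcomb : (∫ u in (0:ℝ)..1, k u * u ^ l * f (c + u * h))
      - f c * ∫ u in (0:ℝ)..1, k u * u ^ l
      = ∫ u in (0:ℝ)..1, k u * u ^ l * (f (c + u * h) - f c) := by
    rw [← intervalIntegral.integral_const_mul,
      ← intervalIntegral.integral_sub hint1 (hint2.const_mul (f c))]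
    apply intervalIntegral.integral_congr
    intro u _
    ring
  rw [hcomb]
  have hfinal : ‖∫ u in (0:ℝ)..1, k u * u ^ l * (f (c + u * h) - f c)‖
      ≤ Mk * (M * h) * |1 - 0| := by
    apply intervalIntegral.norm_integral_le_of_norm_le_const
    intro u hu
    rw [Set.uIoc_of_le (by norm_num : (0:ℝ) ≤ 1)] at hu
    have hu' : u ∈ Set.Icc (0:ℝ) 1 := Set.Ioc_subset_Icc_self hu
    have h1 : |u ^ l| ≤ 1 := by
      rw [abs_pow, abs_of_nonneg hu'.1]
      exact pow_le_one₀ hu'.1 hu'.2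
    rw [Real.norm_eq_abs, abs_mul, abs_mul]
    calc |k u| * |u ^ l| * |f (c + u * h) - f c| ≤ Mk * 1 * (M * h) :=
          mul_le_mul (mul_le_mul (hkb u) h1 (abs_nonneg _) hMk) (hMVT u hu')
            (abs_nonneg _) (mul_nonneg hMk zero_le_one)
      _ = Mk * (M * h) := by ring
  rw [Real.norm_eq_abs] at hfinal
  calc |∫ u in (0:ℝ)..1, k u * u ^ l * (f (c + u * h) - f c)|
      ≤ Mk * (M * h) * |1 - 0| := hfinal
    _ = Mk * M * h := by norm_num; ring
end
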